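/- For every k ∈ ℝ^d, ε ∈ ℝ^d and γ ∈ ℝ^{d(d−1)/2}: U_d(π)·E(ε,γ)(k)·U_d(π)^* = −E(ε,γ)(k), where π denotes the constant vector (π,π,…,π) ∈ ℝ^d and ^* denotes the conjugate transpose. -/

import Mathlib

open Matrix

set_option linter.unusedSectionVars false
set_option maxHeartbeats 1000000

lemma reindex_mul {m n : Type*} [Fintype m] [Fintype n] [DecidableEq m] [DecidableEq n]
    (e : m ≃ n) (A B : Matrix m m ℂ) :
    Matrix.reindex e e A * Matrix.reindex e e B = Matrix.reindex e e (A * B) := by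
  simp [Matrix.reindex_apply, Matrix.submatrix_mul_equiv]

lemma reindex_conjT {m n : Type*} (e : m ≃ n) (A : Matrix m m ℂ) :
    (Matrix.reindex e e A)ᴴ = Matrix.reindex e e Aᴴ := by
  simp [Matrix.reindex_apply, Matrix.conjTranspose_submatrix]

lemma reindex_neg {m n : Type*} (e : m ≃ n) (A : Matrix m m ℂ) :
    -(Matrix.reindex e e A) = Matrix.reindex e e (-A) := by
  simp [Matrix.reindex_apply]; rfl

noncomputable def Umat : (n : ℕ) → (Fin n → ℝ) → Matrix (Fin (2 ^ n)) (Fin (2 ^ n)) ℂ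
  | 0, _ => 1
  | n + 1, ξ =>
      (Matrix.reindex (finSumFinEquiv.trans (finCongr (by rw [pow_succ, mul_two])))
        (finSumFinEquiv.trans (finCongr (by rw [pow_succ, mul_two]))))
        (Matrix.fromBlocks (Umat n fun j => ξ j.castSucc) 0 0
          (Complex.exp (Complex.I * (ξ (Fin.last n) : ℂ)) • Umat n fun j => ξ j.castSucc))

lemma Umat_unitary (n : ℕ) (ξ : Fin n → ℝ) : Umat n ξ * (Umat n ξ)ᴴ = 1 := by
  induction n with
  | zero => simp [Umat]
  | succ n ih =>
    have hc : Complex.exp (Complex.I * ((ξ (Fin.last n) : ℝ) : ℂ)) *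
        star (Complex.exp (Complex.I * ((ξ (Fin.last n) : ℝ) : ℂ))) = 1 := by
      rw [← starRingEnd_apply, ← Complex.exp_conj, ← Complex.exp_add]
      simp [Complex.ext_iff]
    rw [Umat, reindex_conjT, reindex_mul, Matrix.fromBlocks_conjTranspose,
      Matrix.fromBlocks_multiply]
    simp only [Matrix.conjTranspose_smul, Matrix.smul_mul, Matrix.mul_smul, smul_smul,
      Matrix.conjTranspose_zero, Matrix.mul_zero, Matrix.zero_mul, smul_zero, add_zero,
      zero_add, ih, hc, mul_comm, one_smul]
    rw [Matrix.fromBlocks_one]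
    simp [Matrix.reindex_apply]
    exact Matrix.submatrix_one _ (finSumFinEquiv.symm.injective.comp (Equiv.injective _))

lemma Umat_comm (n : ℕ) (ξ ξ' : Fin n → ℝ) :
    Umat n ξ * Umat n ξ' = Umat n ξ' * Umat n ξ := by
  induction n with
  | zero => simp [Umat]
  | succ n ih =>
    simp only [Umat]
    rw [reindex_mul, reindex_mul, Matrix.fromBlocks_multiply, Matrix.fromBlocks_multiply]
    simp only [Matrix.smul_mul, Matrix.mul_smul, smul_smul, Matrix.mul_zero, Matrix.zero_mul,
      add_zero, smul_zero, ih, mul_comm]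

lemma Umat_conj (n : ℕ) (ξ ξ' : Fin n → ℝ) :
    Umat n ξ * Umat n ξ' * (Umat n ξ)ᴴ = Umat n ξ' := by
  rw [Umat_comm, Matrix.mul_assoc, Umat_unitary, Matrix.mul_one]

noncomputable def Mmat : (n : ℕ) → (Fin n → ℂ) → (Fin n → Fin n → ℝ) →
    Matrix (Fin (2 ^ n)) (Fin (2 ^ n)) ℂ
  | 0, _, _ => 0
  | n + 1, a, γ =>
      (Matrix.reindex (finSumFinEquiv.trans (finCongr (by rw [pow_succ, mul_two])))
        (finSumFinEquiv.trans (finCongr (by rw [pow_succ, mul_two]))))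
        (Matrix.fromBlocks
          (Mmat n (fun j => a j.castSucc) fun j k => γ j.castSucc k.castSucc)
          (a (Fin.last n) • Umat n fun j => γ j.castSucc (Fin.last n))
          ((starRingEnd ℂ) (a (Fin.last n)) • (Umat n fun j => γ j.castSucc (Fin.last n))ᴴ)
          (Mmat n (fun j => a j.castSucc) fun j k => γ j.castSucc k.castSucc))

lemma Mmat_conj (n : ℕ) (a : Fin n → ℂ) (γ : Fin n → Fin n → ℝ) :
    Umat n (fun _ => Real.pi) * Mmat n a γ * (Umat n (fun _ => Real.pi))ᴴ = -Mmat n a γ := by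
  induction n with
  | zero => simp [Umat, Mmat]
  | succ n ih =>
    have hc : Complex.exp (Complex.I * ((Real.pi : ℝ) : ℂ)) = -1 := by
      rw [mul_comm, Complex.exp_pi_mul_I]
    have hcs : star (Complex.exp (Complex.I * ((Real.pi : ℝ) : ℂ))) = -1 := by
      rw [hc]; simp
    rw [Umat, Mmat, reindex_conjT, reindex_mul, reindex_mul, reindex_neg]
    congr 1
    rw [Matrix.fromBlocks_conjTranspose, Matrix.fromBlocks_multiply,
      Matrix.fromBlocks_multiply, Matrix.fromBlocks_neg]
    set P := Umat n (fun _ : Fin n => Real.pi) with hP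
    set M := Mmat n (fun j => a j.castSucc) (fun j k => γ j.castSucc k.castSucc) with hMdef
    set V := Umat n (fun j : Fin n => γ j.castSucc (Fin.last n)) with hVdef
    have hM : P * M * Pᴴ = -M := ih _ _
    have hV : P * V * Pᴴ = V := Umat_conj n _ _
    have hVH : P * Vᴴ * Pᴴ = Vᴴ := by
      have h2 := congrArg Matrix.conjTranspose hV
      simpa [Matrix.conjTranspose_mul, Matrix.mul_assoc] using h2
    simp only [hc, hcs, Matrix.conjTranspose_smul, Matrix.smul_mul, Matrix.mul_smul,
      Matrix.zero_mul, Matrix.mul_zero, add_zero, zero_add, smul_zero, neg_smul, one_smul,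
      Matrix.neg_mul, Matrix.mul_neg, neg_neg, hM, hV, hVH, smul_neg,
      Matrix.conjTranspose_zero, Matrix.conjTranspose_neg]

noncomputable def Emat (d L : ℕ) (t : Fin d → ℝ) (ε : Fin d → ℝ) (γ : Fin d → Fin d → ℝ)
    (k : Fin d → ℝ) : Matrix (Fin (2 ^ d)) (Fin (2 ^ d)) ℂ :=
  Mmat d
    (fun j => (t j : ℂ) *
      (1 + Complex.exp (Complex.I * Complex.ofReal (Real.pi / (L : ℝ) * ε j - k j))) *
      (if L = 1 then (1 / 2 : ℂ) else 1))
    (fun j l => -γ j l)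

theorem Emat_conj_pi (d L : ℕ) (hd : 2 ≤ d) (hL : 1 ≤ L) (t : Fin d → ℝ)
    (ht : ∀ j, 0 < t j) (k ε : Fin d → ℝ) (γ : Fin d → Fin d → ℝ) :
    Umat d (fun _ => Real.pi) * Emat d L t ε γ k * (Umat d (fun _ => Real.pi))ᴴ =
      -Emat d L t ε γ k := by
  exact Mmat_conj d _ _
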